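/- Let p, s, t ∈ ℕ and let A_xx, B_xx be skew-symmetric p×p, A_xs, B_xs be p×s, A_xy, B_xy be p×t, and A_ss, B_ss be skew-symmetric s×s complex matrices, and form A = [[A_xx, A_xs, A_xy],[−A_xsᵀ, A_ss, 0],[−A_xyᵀ, 0, 0]] and B = [[B_xx, B_xs, B_xy],[−B_xsᵀ, B_ss, 0],[−B_xyᵀ, 0, 0]]. Assume: (1) for every λ ∈ ℂ the matrix (A_xy + λB_xy)ᵀ has trivial kernel, and B_xyᵀ has trivial kernel; (2) there exists λ₀ ∈ ℂ such that A_ss + λ₀B_ss is invertible, or B_ss is invertible. Then the linear span of the union, over all λ ∈ ℂ with A_ss + λB_ss invertible, of the kernels of A + λB equals the subspace { (0,0,y) : y ∈ ℂ^t } of ℂ^p × ℂ^s × ℂ^t. (In other words, the core subspace of the pencil A + λB is the third block summand U_y.) -/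

import Mathlib

open Matrix

noncomputable section

/-- The skew-symmetric block matrix `[[Xxx, Xxs, Xxy], [-Xxsᵀ, Xss, 0], [-Xxyᵀ, 0, 0]]`. -/
def triMat {p s t : ℕ} (Xxx : Matrix (Fin p) (Fin p) ℂ) (Xxs : Matrix (Fin p) (Fin s) ℂ)
    (Xxy : Matrix (Fin p) (Fin t) ℂ) (Xss : Matrix (Fin s) (Fin s) ℂ) :
    Matrix (Fin p ⊕ (Fin s ⊕ Fin t)) (Fin p ⊕ (Fin s ⊕ Fin t)) ℂ :=
  Matrix.fromBlocks Xxx (Matrix.fromCols Xxs Xxy)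
    (Matrix.fromRows (-Xxsᵀ) (-Xxyᵀ)) (Matrix.fromBlocks Xss 0 0 0)

section Auxiliary

open Polynomial

lemma sep_lemma {K V : Type*} [Field K] [AddCommGroup V] [Module K V]
    (U : Submodule K V) {x : V} (hx : x ∉ U) :
    ∃ ξ : V →ₗ[K] K, (∀ u ∈ U, ξ u = 0) ∧ ξ x ≠ 0 := by
  have hq : U.mkQ x ≠ 0 := by
    simpa [Submodule.Quotient.mk_eq_zero] using hx
  obtain ⟨g, hg⟩ : ∃ g : Module.Dual K (V ⧸ U), g (U.mkQ x) ≠ 0 := by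
    by_contra h
    push_neg at h
    exact hq ((Module.forall_dual_apply_eq_zero_iff K _).mp h)
  refine ⟨g ∘ₗ U.mkQ, fun u hu => ?_, hg⟩
  simp [(Submodule.Quotient.mk_eq_zero U).mpr hu]

lemma aux_coeffs {p t : ℕ} (Axy Bxy : Matrix (Fin p) (Fin t) ℂ)
    (h1inf : ∀ u : Fin p → ℂ, Bxyᵀ.mulVec u = 0 → u = 0)
    (N : Fin p → ℂ[X]) (r : Fin t → ℂ)
    (hN : ∀ j, (∑ i, (C (Axy i j) + X * C (Bxy i j)) * N i) = C (r j)) :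
    ∀ i, N i = 0 := by
  set m := Finset.univ.sup fun i : Fin p => (N i).natDegree with hm
  have key : ∀ g k, m + 1 - k ≤ g → ∀ i, (N i).coeff k = 0 := by
    intro g
    induction g with
    | zero =>
      intro k hk i
      apply Polynomial.coeff_eq_zero_of_natDegree_lt
      have : (N i).natDegree ≤ m := hm ▸ Finset.le_sup (f := fun i : Fin p => (N i).natDegree) (Finset.mem_univ i)
      omega
    | succ g ih =>
      intro k hk
      have hk1 : ∀ i, (N i).coeff (k+1) = 0 := ih (k+1) (by omega)
      have hB : Bxyᵀ.mulVec (fun i => (N i).coeff k) = 0 := by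
        funext j
        have h0 := congrArg (fun q => q.coeff (k+1)) (hN j)
        simp only [Polynomial.finset_sum_coeff, add_mul, Polynomial.coeff_add,
          Polynomial.coeff_C_mul, mul_assoc, Polynomial.coeff_X_mul, hk1, Polynomial.coeff_C,
          mul_zero, zero_add] at h0
        simpa [Matrix.mulVec, dotProduct, Matrix.transpose_apply] using h0
      exact fun i => congrFun (h1inf _ hB) i
  intro i
  ext k
  simpa using key (m+1) k (by omega) i

lemma descent {p t : ℕ} (Axy Bxy : Matrix (Fin p) (Fin t) ℂ)
    (h1 : ∀ lam : ℂ, ∀ u : Fin p → ℂ, (Axy + lam • Bxy)ᵀ.mulVec u = 0 → u = 0)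
    (h1inf : ∀ u : Fin p → ℂ, Bxyᵀ.mulVec u = 0 → u = 0)
    (φ : Fin t → ℂ) :
    ∀ (n : ℕ) (d : ℂ[X]), d ≠ 0 → d.natDegree ≤ n → ∀ N : Fin p → ℂ[X],
      (∀ j, (∑ i, (C (Axy i j) + X * C (Bxy i j)) * N i) = d * C (φ j)) → φ = 0 := by
  intro n
  induction n with
  | zero =>
    intro d hd hdeg N hN
    obtain ⟨c, rfl⟩ := Polynomial.natDegree_eq_zero.mp (Nat.le_zero.mp hdeg)
    have hc : c ≠ 0 := fun h => hd (by simp [h])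
    have hN0 := aux_coeffs Axy Bxy h1inf N (fun j => c * φ j)
      (fun j => by rw [hN j, ← Polynomial.C_mul])
    funext j
    have := hN j
    simp only [hN0, mul_zero, Finset.sum_const_zero, ← Polynomial.C_mul] at this
    have : c * φ j = 0 := by
      have := congrArg (fun q => Polynomial.coeff q 0) this
      simpa using this.symm
    exact (mul_eq_zero.mp this).resolve_left hc
  | succ n ih =>
    intro d hd hdeg N hN
    rcases Nat.lt_or_ge d.natDegree (n+1) with h | h
    · exact ih d hd (by omega) N hN
    · have hdn : d.natDegree = n + 1 := le_antisymm hdeg h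
      have hdegpos : 0 < d.degree := by
        rw [Polynomial.degree_eq_natDegree hd]
        exact_mod_cast by omega
      obtain ⟨α, hα⟩ := Complex.isAlgClosed.exists_root d hdegpos.ne'
      -- evaluate at α
      have hev : (Axy + α • Bxy)ᵀ.mulVec (fun i => (N i).eval α) = 0 := by
        funext j
        have h0 := congrArg (Polynomial.eval α) (hN j)
        simp only [Polynomial.eval_finset_sum, Polynomial.eval_mul, Polynomial.eval_add,
          Polynomial.eval_C, Polynomial.eval_X, ] at h0
        rw [Polynomial.IsRoot.def.mp hα, zero_mul] at h0
        simpa [Matrix.mulVec, dotProduct, Matrix.transpose_apply, Matrix.add_apply,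
          Matrix.smul_apply, smul_eq_mul] using h0
      have hroot : ∀ i, (N i).IsRoot α := by
        have := h1 α _ hev
        intro i
        have hi := congrFun this i
        simpa [Polynomial.IsRoot] using hi
      choose N' hN' using fun i => (Polynomial.dvd_iff_isRoot.mpr (hroot i))
      obtain ⟨d', hd'⟩ := Polynomial.dvd_iff_isRoot.mpr hα
      have hXsub : (X - C α : ℂ[X]) ≠ 0 := Polynomial.X_sub_C_ne_zero α
      have hd'0 : d' ≠ 0 := fun h => hd (by rw [hd', h, mul_zero])
      have hdeg' : d'.natDegree ≤ n := by
        have := Polynomial.natDegree_mul hXsub hd'0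
        rw [← hd'] at this
        rw [Polynomial.natDegree_X_sub_C] at this
        omega
      apply ih d' hd'0 hdeg' N'
      intro j
      apply mul_left_cancel₀ hXsub
      calc (X - C α) * ∑ i, (C (Axy i j) + X * C (Bxy i j)) * N' i
          = ∑ i, (C (Axy i j) + X * C (Bxy i j)) * ((X - C α) * N' i) := by
            rw [Finset.mul_sum]; exact Finset.sum_congr rfl fun i _ => by ring
        _ = d * C (φ j) := by simp_rw [← hN' ]; exact hN j
        _ = (X - C α) * (d' * C (φ j)) := by rw [hd']; ring

lemma lin_expand {K : Type*} [Field K] {n : ℕ} (ξ : (Fin n → K) →ₗ[K] K) (v : Fin n → K) :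
    ξ v = ∑ j, v j * ξ (Pi.single j 1) := by
  have hv : v = ∑ j, Pi.single j (v j) := (Finset.univ_sum_single v).symm
  conv_lhs => rw [hv]
  rw [map_sum]
  refine Finset.sum_congr rfl fun j _ => ?_
  have h1 : Pi.single j (v j) = v j • (Pi.single j 1 : Fin n → K) := by
    funext k; simp [Pi.single_apply]
  rw [h1, _root_.map_smul, smul_eq_mul]

lemma core_span {p t : ℕ} (Axy Bxy : Matrix (Fin p) (Fin t) ℂ)
    (h1 : ∀ lam : ℂ, ∀ u : Fin p → ℂ, (Axy + lam • Bxy)ᵀ.mulVec u = 0 → u = 0)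
    (h1inf : ∀ u : Fin p → ℂ, Bxyᵀ.mulVec u = 0 → u = 0)
    (S : Set ℂ) (hS : S.Infinite) :
    Submodule.span ℂ {y : Fin t → ℂ | ∃ lam ∈ S, (Axy + lam • Bxy).mulVec y = 0} = ⊤ := by
  by_contra hne
  set U := Submodule.span ℂ {y : Fin t → ℂ | ∃ lam ∈ S, (Axy + lam • Bxy).mulVec y = 0} with hU
  obtain ⟨x, hx⟩ : ∃ x, x ∉ U := by
    by_contra h; push_neg at h
    exact hne (Submodule.eq_top_iff'.mpr h)
  obtain ⟨ξ, hξU, hξx⟩ := sep_lemma U hx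
  set φ : Fin t → ℂ := fun j => ξ (Pi.single j 1) with hφ
  have hφne : φ ≠ 0 := by
    intro h
    apply hξx
    rw [lin_expand ξ x]
    have hz : ∀ j, ξ (Pi.single j (1:ℂ)) = 0 := fun j => congrFun h j
    simp [hz]
  have hφker : ∀ lam ∈ S, ∀ y : Fin t → ℂ, (Axy + lam • Bxy).mulVec y = 0 →
      ∑ j, y j * φ j = 0 := by
    intro lam hlam y hy
    rw [← lin_expand ξ y]
    exact hξU y (Submodule.subset_span ⟨lam, hlam, hy⟩)
  -- fraction field setup
  set R := Polynomial ℂ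
  set K := FractionRing R
  set a : R →+* K := algebraMap R K with ha
  have hainj : Function.Injective a := IsFractionRing.injective R K
  set CF : Matrix (Fin t) (Fin p) K :=
    Matrix.of fun j i => a (C (Axy i j) + X * C (Bxy i j)) with hCF
  -- step 1: φF is in the range of CF
  have hsol : ∃ η : Fin p → K, ∀ j, (∑ i, CF j i * η i) = a (C (φ j)) := by
    by_contra hns
    push_neg at hns
    have hnr : (fun j => a (C (φ j))) ∉ LinearMap.range CF.mulVecLin := by
      intro ⟨η, hη⟩
      obtain ⟨j, hj⟩ := hns η
      apply hj
      have := congrFun hη j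
      simpa [Matrix.mulVecLin_apply, Matrix.mulVec, dotProduct] using this
    obtain ⟨ξ2, hξ2r, hξ2φ⟩ := sep_lemma _ hnr
    set η : Fin t → K := fun j => ξ2 (Pi.single j 1) with hη
    have hker : ∀ i, ∑ j, CF j i * η j = 0 := by
      intro i
      have h0 : ξ2 (CF.mulVec (Pi.single i 1)) = 0 :=
        hξ2r _ ⟨Pi.single i 1, rfl⟩
      rw [lin_expand ξ2] at h0
      simpa [Matrix.mulVec_single, hη] using h0
    obtain ⟨b, hb⟩ := IsLocalization.exist_integer_multiples_of_finite
      (nonZeroDivisors R) η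
    choose y hy using hb
    have hab : ∀ j, a (y j) = a b * η j := by
      intro j
      rw [hy j, Algebra.smul_def]
    have hkerR : ∀ i, ∑ j, (C (Axy i j) + X * C (Bxy i j)) * y j = 0 := by
      intro i
      apply hainj
      rw [map_sum, map_zero]
      calc ∑ j, a ((C (Axy i j) + X * C (Bxy i j)) * y j)
          = ∑ j, CF j i * (a b * η j) := by
            refine Finset.sum_congr rfl fun j _ => ?_
            rw [_root_.map_mul, hab j]
            try rfl
        _ = a b * ∑ j, CF j i * η j := by rw [Finset.mul_sum]; exact Finset.sum_congr rfl fun j _ => by ring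
        _ = 0 := by rw [hker i, mul_zero]
    have heval0 : ∀ (lam : ℂ) i, ∑ j, (Axy i j + lam * Bxy i j) * (y j).eval lam = 0 := by
      intro lam i
      have h0 := congrArg (Polynomial.eval lam) (hkerR i)
      rw [Polynomial.eval_finset_sum, Polynomial.eval_zero] at h0
      calc ∑ j, (Axy i j + lam * Bxy i j) * (y j).eval lam
          = ∑ j, Polynomial.eval lam ((C (Axy i j) + X * C (Bxy i j)) * y j) := by
            refine Finset.sum_congr rfl fun j _ => ?_
            rw [Polynomial.eval_mul, Polynomial.eval_add, Polynomial.eval_mul,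
              Polynomial.eval_C, Polynomial.eval_C, Polynomial.eval_X]
        _ = 0 := h0
    have heval : ∀ lam : ℂ, (Axy + lam • Bxy).mulVec (fun j => (y j).eval lam) = 0 := by
      intro lam
      funext i
      simpa [Matrix.mulVec, dotProduct, Matrix.add_apply, Matrix.smul_apply,
        smul_eq_mul] using heval0 lam i
    have hr : (∑ j, y j * C (φ j)) = 0 := by
      apply Polynomial.eq_zero_of_infinite_isRoot
      apply Set.Infinite.mono _ hS
      intro lam hlam
      have h2' := hφker lam hlam _ (heval lam)
      have h3' : Polynomial.eval lam (∑ j, y j * C (φ j)) = ∑ j, Polynomial.eval lam (y j) * φ j := by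
        rw [Polynomial.eval_finset_sum]
        exact Finset.sum_congr rfl fun j _ => by
          rw [Polynomial.eval_mul, Polynomial.eval_C]
      show Polynomial.IsRoot _ lam
      rw [Polynomial.IsRoot.def, h3']
      exact h2'
    apply hξ2φ
    have habne : a b ≠ 0 := by
      intro h
      exact nonZeroDivisors.coe_ne_zero b (hainj (by rw [h, map_zero]))
    have : a b * ξ2 (fun j => a (C (φ j))) = 0 := by
      rw [lin_expand ξ2, Finset.mul_sum]
      calc ∑ j, a b * (a (C (φ j)) * ξ2 (Pi.single j 1))
          = ∑ j, a (C (φ j)) * (a b * η j) := by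
            refine Finset.sum_congr rfl fun j _ => ?_
            simp only [hη]; ring
        _ = a (∑ j, y j * C (φ j)) := by
            rw [map_sum]
            refine (Finset.sum_congr rfl fun j _ => ?_).symm
            rw [_root_.map_mul, hab j]; ring
        _ = 0 := by rw [hr, map_zero]
    exact (mul_eq_zero.mp this).resolve_left habne
  -- step 2: clear denominators and apply descent
  obtain ⟨η, hη⟩ := hsol
  obtain ⟨b, hb⟩ := IsLocalization.exist_integer_multiples_of_finite
    (nonZeroDivisors R) η
  choose N hN using hb
  have hab : ∀ i, a (N i) = a b * η i := by
    intro i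
    rw [hN i, Algebra.smul_def]
  have hid : ∀ j, (∑ i, (C (Axy i j) + X * C (Bxy i j)) * N i) = (b : R) * C (φ j) := by
    intro j
    apply hainj
    rw [map_sum, _root_.map_mul]
    calc ∑ i, a ((C (Axy i j) + X * C (Bxy i j)) * N i)
        = ∑ i, CF j i * (a b * η i) := by
          refine Finset.sum_congr rfl fun i _ => ?_
          rw [_root_.map_mul, hab i]
          try rfl
      _ = a b * ∑ i, CF j i * η i := by rw [Finset.mul_sum]; exact Finset.sum_congr rfl fun i _ => by ring
      _ = a b * a (C (φ j)) := by rw [hη j]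
  have hbne : (b : R) ≠ 0 := nonZeroDivisors.coe_ne_zero b
  exact hφne (descent Axy Bxy h1 h1inf φ ((b:R)).natDegree (b : R) hbne le_rfl N hid)

lemma S_infinite {s : ℕ} (Ass Bss : Matrix (Fin s) (Fin s) ℂ)
    (h2 : (∃ lam₀ : ℂ, IsUnit (Ass + lam₀ • Bss).det) ∨ IsUnit Bss.det) :
    {lam : ℂ | IsUnit (Ass + lam • Bss).det}.Infinite := by
  have heval : ∀ (M N : Matrix (Fin s) (Fin s) ℂ) (lam : ℂ),
      Polynomial.eval lam (M.map C + (X : ℂ[X]) • N.map C).det = (M + lam • N).det := by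
    intro M N lam
    rw [← Polynomial.coe_evalRingHom, RingHom.map_det]
    congr 1
    ext i j
    simp only [RingHom.mapMatrix_apply, Matrix.add_apply, Matrix.smul_apply, Matrix.map_apply, smul_eq_mul, Polynomial.coe_evalRingHom,
      Polynomial.eval_add, Polynomial.eval_mul, Polynomial.eval_C, Polynomial.eval_X]
  set q : ℂ[X] := (Ass.map C + (X : ℂ[X]) • Bss.map C).det with hq
  have hqne : q ≠ 0 := by
    rcases h2 with ⟨lam₀, hu⟩ | hB
    · intro h
      have := heval Ass Bss lam₀
      rw [← hq, h] at this
      simp at this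
      exact hu.ne_zero this.symm
    · set q2 : ℂ[X] := (Bss.map C + (X : ℂ[X]) • Ass.map C).det with hq2
      have hq2ne : q2 ≠ 0 := by
        intro h
        have := heval Bss Ass 0
        rw [← hq2, h] at this
        simp at this
        exact hB.ne_zero this.symm
      obtain ⟨μ, hμ⟩ : ∃ μ : ℂ, μ ∉ ({x | Polynomial.IsRoot q2 x} ∪ {0} : Set ℂ) := by
        have hfin : ({x | Polynomial.IsRoot q2 x} ∪ {0} : Set ℂ).Finite :=
          (Polynomial.finite_setOf_isRoot hq2ne).union (Set.finite_singleton 0)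
        exact (hfin.infinite_compl).nonempty
      simp only [Set.mem_union, Set.mem_setOf_eq, Set.mem_singleton_iff, not_or] at hμ
      obtain ⟨hμroot, hμ0⟩ := hμ
      intro h
      apply hμroot
      rw [Polynomial.IsRoot.def, heval Bss Ass μ]
      have hfact : Bss + μ • Ass = μ • (Ass + μ⁻¹ • Bss) := by
        rw [smul_add, smul_smul, mul_inv_cancel₀ hμ0, one_smul, add_comm]
      rw [hfact, Matrix.det_smul]
      have h1 := heval Ass Bss μ⁻¹
      rw [← hq, h] at h1
      simp only [Polynomial.eval_zero] at h1
      rw [← h1, mul_zero]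
  have hsub : {x | Polynomial.IsRoot q x}ᶜ ⊆ {lam : ℂ | IsUnit (Ass + lam • Bss).det} := by
    intro lam hlam
    simp only [Set.mem_compl_iff, Set.mem_setOf_eq, Polynomial.IsRoot.def] at hlam
    rw [heval Ass Bss lam] at hlam
    exact isUnit_iff_ne_zero.mpr hlam
  exact ((Polynomial.finite_setOf_isRoot hqne).infinite_compl).mono hsub

lemma triMat_add_smul {p s t : ℕ} (Axx Bxx : Matrix (Fin p) (Fin p) ℂ)
    (Axs Bxs : Matrix (Fin p) (Fin s) ℂ) (Axy Bxy : Matrix (Fin p) (Fin t) ℂ)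
    (Ass Bss : Matrix (Fin s) (Fin s) ℂ) (lam : ℂ) :
    triMat Axx Axs Axy Ass + lam • triMat Bxx Bxs Bxy Bss =
      triMat (Axx + lam • Bxx) (Axs + lam • Bxs) (Axy + lam • Bxy) (Ass + lam • Bss) := by
  ext (i | i | i) (j | j | j) <;>
    simp [triMat, Matrix.fromBlocks_apply₁₁, Matrix.fromBlocks_apply₁₂,
      Matrix.fromBlocks_apply₂₁, Matrix.fromBlocks_apply₂₂,
      Matrix.fromCols_apply_inl, Matrix.fromCols_apply_inr,
      Matrix.fromRows_apply_inl, Matrix.fromRows_apply_inr,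
      Matrix.add_apply, Matrix.smul_apply, Matrix.neg_apply, Matrix.transpose_apply,
      smul_eq_mul, mul_add, mul_comm] <;> ring

lemma triMat_mulVec {p s t : ℕ} (Xxx : Matrix (Fin p) (Fin p) ℂ) (Xxs : Matrix (Fin p) (Fin s) ℂ)
    (Xxy : Matrix (Fin p) (Fin t) ℂ) (Xss : Matrix (Fin s) (Fin s) ℂ)
    (w : (Fin p ⊕ (Fin s ⊕ Fin t)) → ℂ) :
    (triMat Xxx Xxs Xxy Xss).mulVec w =
      Sum.elim
        (Xxx.mulVec (w ∘ Sum.inl) + Xxs.mulVec (w ∘ Sum.inr ∘ Sum.inl)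
          + Xxy.mulVec (w ∘ Sum.inr ∘ Sum.inr))
        (Sum.elim
          (-(Xxsᵀ.mulVec (w ∘ Sum.inl)) + Xss.mulVec (w ∘ Sum.inr ∘ Sum.inl))
          (-(Xxyᵀ.mulVec (w ∘ Sum.inl)))) := by
  funext x
  rcases x with i | i | i <;>
    simp [triMat, Matrix.mulVec, dotProduct, Fintype.sum_sum_type,
      Matrix.fromBlocks_apply₁₁, Matrix.fromBlocks_apply₁₂,
      Matrix.fromBlocks_apply₂₁, Matrix.fromBlocks_apply₂₂,
      Matrix.fromCols_apply_inl, Matrix.fromCols_apply_inr,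
      Matrix.fromRows_apply_inl, Matrix.fromRows_apply_inr,
      Matrix.neg_apply, Matrix.transpose_apply, add_assoc, Finset.sum_add_distrib,
      Finset.sum_neg_distrib]

end Auxiliary

/-- The core subspace of a block upper-triangular skew-symmetric pencil — the
span of the kernels of `A + λ B` over all `λ` with `Ass + λ Bss` invertible —
is the third block summand `U_y = {(0, 0, y)}`. -/
theorem core_of_block_upper_triangular_pencil
    (p s t : ℕ)
    (Axx Bxx : Matrix (Fin p) (Fin p) ℂ)
    (Axs Bxs : Matrix (Fin p) (Fin s) ℂ)
    (Axy Bxy : Matrix (Fin p) (Fin t) ℂ)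
    (Ass Bss : Matrix (Fin s) (Fin s) ℂ)
    (hAxx : Axxᵀ = -Axx) (hBxx : Bxxᵀ = -Bxx)
    (hAss : Assᵀ = -Ass) (hBss : Bssᵀ = -Bss)
    -- (1) `(Axy + λ Bxy)ᵀ` has trivial kernel for every `λ ∈ ℂ ∪ {∞}`
    (h1 : ∀ lam : ℂ, ∀ u : Fin p → ℂ,
      (Axy + lam • Bxy)ᵀ.mulVec u = 0 → u = 0)
    (h1inf : ∀ u : Fin p → ℂ, Bxyᵀ.mulVec u = 0 → u = 0)
    -- (2) `Ass + λ₀ Bss` is nondegenerate for some `λ₀ ∈ ℂ ∪ {∞}`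
    (h2 : (∃ lam₀ : ℂ, IsUnit (Ass + lam₀ • Bss).det) ∨ IsUnit Bss.det) :
    (Submodule.span ℂ
        {w : (Fin p ⊕ (Fin s ⊕ Fin t)) → ℂ |
          ∃ lam : ℂ, IsUnit (Ass + lam • Bss).det ∧
            (triMat Axx Axs Axy Ass + lam • triMat Bxx Bxs Bxy Bss).mulVec w = 0} :
      Set ((Fin p ⊕ (Fin s ⊕ Fin t)) → ℂ)) =
      {w : (Fin p ⊕ (Fin s ⊕ Fin t)) → ℂ |
        (∀ i : Fin p, w (Sum.inl i) = 0) ∧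
        (∀ i : Fin s, w (Sum.inr (Sum.inl i)) = 0)} := by
  set ι := Fin p ⊕ (Fin s ⊕ Fin t)
  set gen := {w : ι → ℂ |
      ∃ lam : ℂ, IsUnit (Ass + lam • Bss).det ∧
        (triMat Axx Axs Axy Ass + lam • triMat Bxx Bxs Bxy Bss).mulVec w = 0} with hgen
  -- target submodule
  set Usub : Submodule ℂ (ι → ℂ) :=
    { carrier := {w : ι → ℂ |
        (∀ i : Fin p, w (Sum.inl i) = 0) ∧ (∀ i : Fin s, w (Sum.inr (Sum.inl i)) = 0)}
      add_mem' := by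
        rintro a b ⟨ha1, ha2⟩ ⟨hb1, hb2⟩
        exact ⟨fun i => by simp [ha1 i, hb1 i], fun i => by simp [ha2 i, hb2 i]⟩
      zero_mem' := ⟨fun i => rfl, fun i => rfl⟩
      smul_mem' := by
        rintro c a ⟨ha1, ha2⟩
        exact ⟨fun i => by simp [ha1 i], fun i => by simp [ha2 i]⟩ } with hUsub
  apply le_antisymm
  · -- span ⊆ Usub
    have hle : Submodule.span ℂ gen ≤ Usub := by
      rw [Submodule.span_le]
      rintro w ⟨lam, hdet, hw⟩
      rw [triMat_add_smul] at hw
      rw [triMat_mulVec] at hw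
      have hu : (w ∘ Sum.inl) = 0 := by
        apply h1 lam
        have h3 : ∀ i : Fin t, (-(((Axy + lam • Bxy)ᵀ).mulVec (w ∘ Sum.inl))) i = 0 :=
          fun i => congrFun hw (Sum.inr (Sum.inr i))
        funext i
        have := h3 i
        simpa [neg_eq_zero] using this
      have hv : (w ∘ Sum.inr ∘ Sum.inl) = 0 := by
        apply Matrix.eq_zero_of_mulVec_eq_zero (isUnit_iff_ne_zero.mp hdet)
        funext i
        have h4 := congrFun hw (Sum.inr (Sum.inl i))
        simp only [Sum.elim_inr, Sum.elim_inl, Pi.add_apply, Pi.neg_apply, Pi.zero_apply] at h4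
        rw [hu] at h4
        simpa [Matrix.mulVec_zero] using h4
      exact ⟨fun i => congrFun hu i, fun i => congrFun hv i⟩
    intro w hw
    exact hle hw
  · -- Usub ⊆ span
    intro w hw
    obtain ⟨hw1, hw2⟩ := hw
    -- the linear embedding
    set e : (Fin t → ℂ) →ₗ[ℂ] (ι → ℂ) :=
      { toFun := fun y => Sum.elim 0 (Sum.elim 0 y)
        map_add' := by
          intro y z
          funext x
          rcases x with i | i | i <;> simp
        map_smul' := by
          intro c y
          funext x
          rcases x with i | i | i <;> simp } with he
    have hwe : w = e (w ∘ Sum.inr ∘ Sum.inr) := by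
      funext x
      rcases x with i | i | i
      · exact (hw1 i).trans rfl
      · exact (hw2 i).trans rfl
      · rfl
    set S := {lam : ℂ | IsUnit (Ass + lam • Bss).det} with hS
    have hScore := core_span Axy Bxy h1 h1inf S (S_infinite Ass Bss h2)
    have himg : e '' {y : Fin t → ℂ | ∃ lam ∈ S, (Axy + lam • Bxy).mulVec y = 0} ⊆ gen := by
      rintro _ ⟨y, ⟨lam, hlam, hy⟩, rfl⟩
      refine ⟨lam, hlam, ?_⟩
      rw [triMat_add_smul, triMat_mulVec]
      have hinl : (e y) ∘ Sum.inl = 0 := rfl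
      have hinrl : (e y) ∘ Sum.inr ∘ Sum.inl = 0 := rfl
      have hinrr : (e y) ∘ Sum.inr ∘ Sum.inr = y := rfl
      rw [hinl, hinrl, hinrr]
      funext x
      rcases x with i | i | i
      · simp only [Sum.elim_inl, Pi.add_apply, Matrix.mulVec_zero, Pi.zero_apply,
          zero_add, add_zero]
        exact congrFun hy i
      · simp [Matrix.mulVec_zero]
      · simp [Matrix.mulVec_zero]
    have : e (w ∘ Sum.inr ∘ Sum.inr) ∈ Submodule.span ℂ gen := by
      have hmem : (w ∘ Sum.inr ∘ Sum.inr) ∈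
          Submodule.span ℂ {y : Fin t → ℂ | ∃ lam ∈ S, (Axy + lam • Bxy).mulVec y = 0} := by
        rw [hScore]; trivial
      have := Submodule.mem_map_of_mem (f := e) hmem
      rw [Submodule.map_span] at this
      exact Submodule.span_mono himg this
    rw [hwe]
    exact this

end
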